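/- Let S ⊆ K be subrings of a finite ring R, p the smallest prime dividing |R|, and suppose |S : Z(S,K)| = p^n. Then Pr(S,K) ≤ (p^n + p - 1)/p^{n+1}. Moreover, if S = K then Pr(S,K) ≥ (p^n + p^{n-1} - 1)/p^{2n-1}. -/

import Mathlib

open Finset

lemma aux_card_mul_le {G : Type*} [AddGroup G] [Fintype G] {p : ℕ}
    (hmin : ∀ q : ℕ, q.Prime → q ∣ Nat.card G → p ≤ q)
    {A B : AddSubgroup G} (hAB : A ≤ B) (hne : ¬ B ≤ A) :
    p * Nat.card A ≤ Nat.card B := by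
  obtain ⟨m, hm⟩ := AddSubgroup.card_dvd_of_le hAB
  have hApos : 0 < Nat.card A := Nat.card_pos
  have hBpos : 0 < Nat.card B := Nat.card_pos
  have hlt : Nat.card A < Nat.card B := by
    have h1 : (A : Set G) ⊂ (B : Set G) := ⟨hAB, hne⟩
    have := Set.ncard_lt_ncard h1 (Set.toFinite _)
    simpa [← Nat.card_coe_set_eq] using this
  have hm0 : m ≠ 0 := by rintro rfl; simp at hm; omega
  have hm1 : m ≠ 1 := by rintro rfl; simp at hm; omega
  have hmdvd : m ∣ Nat.card G :=
    (Dvd.intro_left _ hm.symm).trans (AddSubgroup.card_addSubgroup_dvd_card B)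
  have hple : p ≤ m :=
    le_trans (hmin m.minFac (Nat.minFac_prime hm1) ((Nat.minFac_dvd m).trans hmdvd))
      (Nat.minFac_le (by omega))
  calc p * Nat.card A ≤ m * Nat.card A := Nat.mul_le_mul_right _ hple
    _ = Nat.card B := by rw [hm, Nat.mul_comm]

/-- `Pr_r(S,K)`: the probability that a uniformly random pair `(s,k) ∈ S × K`
satisfies `s*k - k*s = r`. -/
noncomputable def ringPr {R : Type*} [NonUnitalRing R] [Fintype R]
    (S K : NonUnitalSubring R) (r : R) : ℚ :=
  (Nat.card {p : R × R // p.1 ∈ S ∧ p.2 ∈ K ∧ p.1 * p.2 - p.2 * p.1 = r} : ℚ) /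
    ((Nat.card S : ℚ) * (Nat.card K : ℚ))

set_option maxHeartbeats 1000000 in
theorem ringPr_bounds_of_index_prime_pow {R : Type*} [NonUnitalRing R] [Fintype R]
    (S K : NonUnitalSubring R) (hSK : S ≤ K) (p n : ℕ) (hp : p.Prime)
    (hpdvd : p ∣ Nat.card R) (hmin : ∀ q : ℕ, q.Prime → q ∣ Nat.card R → p ≤ q)
    (hidx : Nat.card S = p ^ n * Nat.card {s : R // s ∈ S ∧ ∀ k ∈ K, s * k = k * s}) :
    ringPr S K 0 ≤ ((p : ℚ) ^ n + p - 1) / (p : ℚ) ^ (n + 1) ∧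
      (S = K → ringPr S K 0 ≥ ((p : ℚ) ^ n + (p : ℚ) ^ (n - 1) - 1) / (p : ℚ) ^ (2 * n - 1)) := by
  classical
  -- centralizer of s in K, as additive subgroup
  set C : R → AddSubgroup R := fun s =>
    { carrier := {k | k ∈ K ∧ s * k = k * s}
      zero_mem' := ⟨K.zero_mem, by simp⟩
      add_mem' := fun {a b} ha hb =>
        ⟨K.add_mem ha.1 hb.1, by rw [mul_add, add_mul, ha.2, hb.2]⟩
      neg_mem' := fun {a} ha => ⟨K.neg_mem ha.1, by rw [mul_neg, neg_mul, ha.2]⟩ } with hC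
  have hCmem : ∀ s k, k ∈ C s ↔ (k ∈ K ∧ s * k = k * s) := fun s k => Iff.rfl
  set KA : AddSubgroup R :=
    { carrier := K
      zero_mem' := K.zero_mem
      add_mem' := fun ha hb => K.add_mem ha hb
      neg_mem' := fun ha => K.neg_mem ha } with hKA
  have hKAmem : ∀ k, k ∈ KA ↔ k ∈ K := fun k => Iff.rfl
  set ZA : AddSubgroup R :=
    { carrier := {s | s ∈ S ∧ ∀ k ∈ K, s * k = k * s}
      zero_mem' := ⟨S.zero_mem, by simp⟩
      add_mem' := fun {a b} ha hb =>
        ⟨S.add_mem ha.1 hb.1, fun k hk => by rw [add_mul, mul_add, ha.2 k hk, hb.2 k hk]⟩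
      neg_mem' := fun {a} ha =>
        ⟨S.neg_mem ha.1, fun k hk => by rw [neg_mul, mul_neg, ha.2 k hk]⟩ } with hZA
  have hZAmem : ∀ s, s ∈ ZA ↔ (s ∈ S ∧ ∀ k ∈ K, s * k = k * s) := fun s => Iff.rfl
  have cardsub : ∀ (P : R → Prop) [DecidablePred P],
      Nat.card {x // P x} = (univ.filter P).card := by
    intro P hP
    rw [Nat.card_eq_fintype_card, Fintype.card_subtype]
  have fcong : ∀ (P Q : R → Prop) [DecidablePred P] [DecidablePred Q],
      (∀ x, P x ↔ Q x) → (univ.filter P).card = (univ.filter Q).card := by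
    intro P Q _ _ h
    congr 1
    exact Finset.filter_congr fun x _ => h x
  -- finsets and cardinalities
  set Sf : Finset R := univ.filter (· ∈ S) with hSf
  set Kf : Finset R := univ.filter (· ∈ K) with hKf
  set pred : R → Prop := fun s => ∀ k ∈ K, s * k = k * s with hpred
  set Zf : Finset R := Sf.filter pred with hZf
  set c : R → ℕ := fun s => (univ.filter (fun k => k ∈ K ∧ s * k = k * s)).card with hc
  set sc := Sf.card with hscdef
  set kc := Kf.card with hkcdef
  set zc := Zf.card with hzcdef
  set tc := (Sf.filter (fun s => ¬ pred s)).card with htcdef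
  -- basic card identities
  have hcCs : ∀ s, c s = Nat.card (C s) := by
    intro s
    rw [cardsub, hc]
    exact fcong _ _ fun k => (hCmem s k).symm
  have hkcKA : kc = Nat.card KA := by
    rw [cardsub, hkcdef, hKf]
    exact fcong _ _ fun k => (hKAmem k).symm
  have hzcZA : zc = Nat.card ZA := by
    rw [cardsub, hzcdef, hZf, hSf, Finset.filter_filter]
    exact fcong _ _ fun s => (hZAmem s).symm
  have hcardS : Nat.card S = sc := by
    rw [hscdef, hSf]; try exact cardsub _
  have hcardK : Nat.card K = kc := by
    rw [hkcdef, hKf]; try exact cardsub _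
  have hcardZ : Nat.card {s : R // s ∈ S ∧ ∀ k ∈ K, s * k = k * s} = zc := by
    rw [hzcdef, hZf, hSf, Finset.filter_filter, cardsub]
    try exact fcong _ _ fun s => Iff.rfl
  have hidx' : sc = p ^ n * zc := by rw [← hcardS, ← hcardZ, hidx]
  have hzc1 : 1 ≤ zc := by
    have h0 : (0 : R) ∈ Zf := by
      rw [hZf, Finset.mem_filter, hSf, Finset.mem_filter]
      exact ⟨⟨Finset.mem_univ _, S.zero_mem⟩, fun k _ => by simp⟩
    rw [hzcdef]
    exact Finset.card_pos.mpr ⟨0, h0⟩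
  have hkc1 : 1 ≤ kc := by
    have h0 : (0 : R) ∈ Kf := by
      rw [hKf, Finset.mem_filter]
      exact ⟨Finset.mem_univ _, K.zero_mem⟩
    rw [hkcdef]
    exact Finset.card_pos.mpr ⟨0, h0⟩
  have hsplit : zc + tc = sc := by
    rw [hzcdef, htcdef, hscdef, hZf]
    exact Finset.card_filter_add_card_filter_not _
  -- the number of commuting pairs
  set N : ℕ := ∑ s ∈ Sf, c s with hNdef
  have hN : Nat.card {q : R × R // q.1 ∈ S ∧ q.2 ∈ K ∧ q.1 * q.2 - q.2 * q.1 = 0} = N := by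
    rw [Nat.card_eq_fintype_card, Fintype.card_subtype, Finset.card_filter,
      Fintype.sum_prod_type, hNdef, hSf, Finset.sum_filter]
    refine Finset.sum_congr rfl fun s _ => ?_
    by_cases hs : s ∈ S
    · simp only [hs, true_and, if_true, hc, Finset.card_filter, sub_eq_zero]
    · simp [hs]
  -- value of c on central elements
  have hczc : ∀ s ∈ Zf, c s = kc := by
    intro s hs
    rw [hZf, Finset.mem_filter] at hs
    have hcomm : ∀ k ∈ K, s * k = k * s := hs.2
    rw [hc, hkcdef, hKf]
    exact fcong _ _ fun k => ⟨And.left, fun hk => ⟨hk, hcomm k hk⟩⟩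
  have hNsum : N = zc * kc + ∑ s ∈ Sf.filter (fun s => ¬ pred s), c s := by
    rw [hNdef, ← Finset.sum_filter_add_sum_filter_not Sf pred c, ← hZf]
    congr 1
    rw [Finset.sum_congr rfl hczc, Finset.sum_const, smul_eq_mul, hzcdef]
  -- upper bound on c for non-central elements
  have hub : ∀ s ∈ Sf.filter (fun s => ¬ pred s), p * c s ≤ kc := by
    intro s hs
    obtain ⟨hsSf, hnp⟩ := Finset.mem_filter.mp hs
    have hnc : ¬ ∀ k ∈ K, s * k = k * s := hnp
    push_neg at hnc
    obtain ⟨k, hkK, hknc⟩ := hnc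
    rw [hcCs, hkcKA]
    refine aux_card_mul_le hmin (fun x hx => hx.1) ?_
    intro hle
    exact hknc ((hCmem s k).mp (hle ((hKAmem k).mpr hkK))).2
  have hupN : p * N ≤ p * (zc * kc) + tc * kc := by
    rw [hNsum, Nat.mul_add]
    refine Nat.add_le_add_left ?_ _
    calc p * ∑ s ∈ Sf.filter (fun s => ¬ pred s), c s
        = ∑ s ∈ Sf.filter (fun s => ¬ pred s), p * c s := by rw [Finset.mul_sum]
      _ ≤ ∑ _s ∈ Sf.filter (fun s => ¬ pred s), kc := Finset.sum_le_sum hub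
      _ = tc * kc := by rw [Finset.sum_const, smul_eq_mul, htcdef]
  -- lower bound on c for non-central elements
  have hlb : ∀ s ∈ Sf.filter (fun s => ¬ pred s), p * zc ≤ c s := by
    intro s hs
    obtain ⟨hsSf, hnp⟩ := Finset.mem_filter.mp hs
    have hsS : s ∈ S := by
      rw [hSf, Finset.mem_filter] at hsSf
      exact hsSf.2
    have hnc : ¬ ∀ k ∈ K, s * k = k * s := hnp
    rw [hcCs, hzcZA]
    refine aux_card_mul_le hmin ?_ ?_
    · intro z hz
      rw [hZAmem] at hz
      exact (hCmem s z).mpr ⟨hSK hz.1, (hz.2 s (hSK hsS)).symm⟩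
    · intro hle
      exact hnc (((hZAmem s).mp (hle ((hCmem s s).mpr ⟨hSK hsS, rfl⟩))).2)
  have hloN : zc * kc + tc * (p * zc) ≤ N := by
    rw [hNsum]
    refine Nat.add_le_add_left ?_ _
    calc tc * (p * zc) = ∑ _s ∈ Sf.filter (fun s => ¬ pred s), p * zc := by
          rw [Finset.sum_const, smul_eq_mul, htcdef]
      _ ≤ ∑ s ∈ Sf.filter (fun s => ¬ pred s), c s := Finset.sum_le_sum hlb
  -- move to ℚ
  have hp2 : 2 ≤ p := hp.two_le
  have hPr : ringPr S K 0 = (N : ℚ) / ((sc : ℚ) * (kc : ℚ)) := by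
    rw [ringPr, hN, hcardS, hcardK]
  have hkcsc' : S = K → kc = sc := by
    intro h
    rw [hkcdef, hscdef, hKf, hSf, h]
  clear_value N sc kc zc tc
  clear hN hcardS hcardK hcardZ hidx hczc hNsum hub hlb hcCs hkcKA hzcZA hNdef
    hscdef hkcdef hzcdef htcdef hCmem hKAmem hZAmem cardsub fcong
    hc hZf hSf hKf hpred hpdvd hmin hC hKA hZA
  clear c C KA ZA Zf pred Kf Sf
  have hscpos : (0 : ℚ) < (sc : ℚ) := by
    have h1 : 0 < sc := by omega
    exact_mod_cast h1
  have hkcpos : (0 : ℚ) < (kc : ℚ) := by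
    have h1 : 0 < kc := by omega
    exact_mod_cast h1
  have hppos : (0 : ℚ) < (p : ℚ) := by
    have h1 : 0 < p := by omega
    exact_mod_cast h1
  have hQup : (p : ℚ) * N ≤ (p : ℚ) * ((zc : ℚ) * kc) + (tc : ℚ) * kc := by exact_mod_cast hupN
  have hQlo : (zc : ℚ) * kc + (tc : ℚ) * ((p : ℚ) * zc) ≤ (N : ℚ) := by exact_mod_cast hloN
  have hQsplit : (zc : ℚ) + tc = sc := by exact_mod_cast hsplit
  have hQidx : (sc : ℚ) = (p : ℚ) ^ n * zc := by exact_mod_cast hidx'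
  have hzcQ : (1 : ℚ) ≤ (zc : ℚ) := by exact_mod_cast hzc1
  have htcnn : (0 : ℚ) ≤ (tc : ℚ) := by positivity
  constructor
  · rw [hPr, div_le_div_iff₀ (by positivity) (by positivity)]
    have h1 : (p : ℚ) ^ n * ((p : ℚ) * N) ≤ (p : ℚ) ^ n * ((p : ℚ) * ((zc : ℚ) * kc) + (tc : ℚ) * kc) :=
      mul_le_mul_of_nonneg_left hQup (by positivity)
    have htcQ : (tc : ℚ) = (p : ℚ) ^ n * zc - zc := by rw [← hQidx]; linarith
    calc (N : ℚ) * (p : ℚ) ^ (n + 1) = (p : ℚ) ^ n * ((p : ℚ) * N) := by ring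
      _ ≤ (p : ℚ) ^ n * ((p : ℚ) * ((zc : ℚ) * kc) + (tc : ℚ) * kc) := h1
      _ = ((p : ℚ) ^ n + (p : ℚ) - 1) * ((sc : ℚ) * kc) := by rw [htcQ, hQidx]; ring
  · intro hSKeq
    have hkcsc : (kc : ℚ) = (sc : ℚ) := by exact_mod_cast hkcsc' hSKeq
    rcases n with _ | m
    · -- n = 0 : S is central, Pr = 1
      have hzcsc : (sc : ℚ) = (zc : ℚ) := by rw [hQidx]; ring
      have htc0 : (tc : ℚ) = 0 := by linarith
      have hL : ((p : ℚ) ^ (0 : ℕ) + (p : ℚ) ^ ((0 : ℕ) - 1) - 1) / (p : ℚ) ^ (2 * 0 - 1) = 1 := by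
        norm_num
      rw [hPr, ge_iff_le, hL, le_div_iff₀ (by positivity)]
      have e1 : (tc : ℚ) * ((p : ℚ) * zc) = 0 := by rw [htc0]; ring
      have e2 : (sc : ℚ) * kc = (zc : ℚ) * kc := by rw [hzcsc]
      linarith
    · have h2m : 2 * (m + 1) - 1 = 2 * m + 1 := by omega
      have h1m : (m + 1) - 1 = m := by omega
      rw [hPr, ge_iff_le, h2m, h1m, div_le_div_iff₀ (by positivity) (by positivity)]
      have hQtc : (tc : ℚ) = (sc : ℚ) - zc := by linarith
      have hQidx' : (sc : ℚ) = (p : ℚ) ^ m * (p : ℚ) * zc := by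
        rw [hQidx, pow_succ]
      have h1 : ((zc : ℚ) * kc + (tc : ℚ) * ((p : ℚ) * zc)) * ((p : ℚ) ^ m * (p : ℚ) ^ m * p)
          ≤ (N : ℚ) * ((p : ℚ) ^ m * (p : ℚ) ^ m * p) :=
        mul_le_mul_of_nonneg_right hQlo (by positivity)
      calc ((p : ℚ) ^ (m + 1) + (p : ℚ) ^ m - 1) * ((sc : ℚ) * kc)
          = ((zc : ℚ) * kc + (tc : ℚ) * ((p : ℚ) * zc)) * ((p : ℚ) ^ m * (p : ℚ) ^ m * p) := by
            rw [hkcsc, hQtc, hQidx']; ring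
        _ ≤ (N : ℚ) * ((p : ℚ) ^ m * (p : ℚ) ^ m * p) := h1
        _ = (N : ℚ) * (p : ℚ) ^ (2 * m + 1) := by ring
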